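/- Let $(\pi_l)_{l\geq 1}$ be probabilities satisfying $\pi_{j+1} = \bar{p}\pi_j + p\pi_{N+j}$ for $1 \leq j \leq \tau-1$ and $\pi_{j+1} = \bar{p}\pi_j$ for $j \geq \tau+1$, together with $\bar{p}\pi_1 = p\sum_{k=2}^{N}\pi_k$ (with $\tau > N \geq 1$, $p \in (0,1)$, $\bar p = 1-p$). Then $\bar{p}\pi_{j+1} = p\sum_{k=j+2}^{N+j}\pi_k$ for all $1 \leq j \leq \tau - 1$, and in particular $\pi_\tau = \pi_{\tau+1}(1-\bar{p}^{N-1})/\bar{p}$. -/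

import Mathlib

open Finset

/-- Balance equations of the single-threshold buffer-ignorant strategy: from
`π_{j+1} = p̄ π_j + p π_{N+j}` (`1 ≤ j ≤ τ-1`), `π_{j+1} = p̄ π_j` (`j ≥ τ+1`) and
`p̄ π_1 = p ∑_{k=2}^N π_k`, one deduces `p̄ π_{j+1} = p ∑_{k=j+2}^{N+j} π_k` for all
`1 ≤ j ≤ τ-1`, and in particular `π_τ = π_{τ+1} (1 - p̄^{N-1}) / p̄`. -/
theorem stmt_14
    (p : ℝ) (hp : p ∈ Set.Ioo (0 : ℝ) 1)
    (N τ : ℕ) (hN : 1 ≤ N) (hτ : N < τ)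
    (π : ℕ → ℝ)
    (hrec : ∀ j : ℕ, 1 ≤ j → j ≤ τ - 1 →
      π (j + 1) = (1 - p) * π j + p * π (N + j))
    (htail : ∀ j : ℕ, τ + 1 ≤ j → π (j + 1) = (1 - p) * π j)
    (hfirst : (1 - p) * π 1 = p * ∑ k ∈ Finset.Icc 2 N, π k) :
    (∀ j : ℕ, 1 ≤ j → j ≤ τ - 1 →
      (1 - p) * π (j + 1) = p * ∑ k ∈ Finset.Icc (j + 2) (N + j), π k) ∧
    π τ = π (τ + 1) * (1 - (1 - p) ^ (N - 1)) / (1 - p) := by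
  obtain ⟨hp0, hp1⟩ := hp
  have hq : (1 : ℝ) - p ≠ 0 := by linarith
  -- strengthened first part including j = 0
  have key : ∀ j : ℕ, j ≤ τ - 1 →
      (1 - p) * π (j + 1) = p * ∑ k ∈ Finset.Icc (j + 2) (N + j), π k := by
    intro j
    induction j with
    | zero => intro _; simpa using hfirst
    | succ j ih =>
      intro hj
      have hj' : j ≤ τ - 1 := by omega
      have h1 : 1 ≤ j + 1 := by omega
      have hrec' := hrec (j + 1) h1 hj
      have split1 : ∑ k ∈ Finset.Icc (j + 2) (N + j + 1), π k
          = (∑ k ∈ Finset.Icc (j + 2) (N + j), π k) + π (N + j + 1) := by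
        have : j + 2 ≤ N + j + 1 := by omega
        rw [Finset.sum_Icc_succ_top this]
      have split2 : ∑ k ∈ Finset.Icc (j + 2) (N + j + 1), π k
          = π (j + 2) + ∑ k ∈ Finset.Icc (j + 3) (N + j + 1), π k := by
        have h2 : j + 2 ≤ N + j + 1 := by omega
        rw [Finset.Icc_eq_cons_Ioc h2, Finset.sum_cons]
        congr 1
        rw [← Finset.Icc_add_one_left_eq_Ioc]; rfl
      have := ih hj'
      have harr : N + (j + 1) = N + j + 1 := by ring
      rw [show j + 1 + 2 = j + 3 from rfl, harr]
      have : p * ∑ k ∈ Finset.Icc (j + 3) (N + j + 1), π k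
          = p * ∑ k ∈ Finset.Icc (j + 2) (N + j), π k + p * π (N + j + 1)
            - p * π (j + 2) := by
        have := split1.symm.trans split2
        nlinarith [this]
      rw [this, ← ih hj']
      have : π (N + (j + 1)) = π (N + j + 1) := by ring_nf
      nlinarith [hrec', this]
  constructor
  · intro j _ hj; exact key j hj
  · -- tail powers
    have tailpow : ∀ k : ℕ, π (τ + 1 + k) = (1 - p) ^ k * π (τ + 1) := by
      intro k
      induction k with
      | zero => simp
      | succ k ih =>
        have : τ + 1 + (k + 1) = (τ + 1 + k) + 1 := by omega
        rw [this, htail (τ + 1 + k) (by omega), ih, pow_succ]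
        ring
    have hkey := key (τ - 1) (le_refl _)
    have hτ1 : τ - 1 + 1 = τ := by omega
    have hτ2 : τ - 1 + 2 = τ + 1 := by omega
    rw [hτ1, hτ2] at hkey
    -- rewrite the sum via range
    have hsum : ∑ k ∈ Finset.Icc (τ + 1) (N + (τ - 1)), π k
        = ∑ i ∈ Finset.range (N - 1), π (τ + 1 + i) := by
      rw [← Finset.Ico_add_one_right_eq_Icc, Finset.sum_Ico_eq_sum_range]
      have : N + (τ - 1) + 1 - (τ + 1) = N - 1 := by omega
      rw [this]
    have hgeo : ∑ i ∈ Finset.range (N - 1), π (τ + 1 + i)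
        = (∑ i ∈ Finset.range (N - 1), (1 - p) ^ i) * π (τ + 1) := by
      rw [Finset.sum_mul]
      exact Finset.sum_congr rfl fun i _ => tailpow i
    have hmul : (∑ i ∈ Finset.range (N - 1), (1 - p) ^ i) * ((1 - p) - 1)
        = (1 - p) ^ (N - 1) - 1 := geom_sum_mul (1 - p) (N - 1)
    have hps : p * (∑ i ∈ Finset.range (N - 1), (1 - p) ^ i)
        = 1 - (1 - p) ^ (N - 1) := by nlinarith [hmul]
    have : (1 - p) * π τ = (1 - (1 - p) ^ (N - 1)) * π (τ + 1) := by
      rw [hkey, hsum, hgeo, ← mul_assoc, hps]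
    field_simp
    linarith [this]
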